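/- arXiv:2506.10632 — 4 statements merged into one kernel-verified Lean document; each statement's English description precedes it below -/
import Mathlib

section
/- Let φ : ℝⁿ → ℝ be twice continuously differentiable. If for all t, t' in a convex open set S the Bregman divergence of φ₁ equals that of φ₂, i.e., φ₁(t) - φ₁(t') - ⟨∇φ₁(t'), t - t'⟩ = φ₂(t) - φ₂(t') - ⟨∇φ₂(t'), t - t'⟩, then φ₁ - φ₂ is affine on S: there exist c ∈ ℝⁿ and b ∈ ℝ with φ₁(t) = φ₂(t) + ⟨c, t⟩ + b for all t ∈ S. -/
open scoped RealInnerProductSpace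

/-- If two differentiable functions on a nonempty convex open set `S` have equal Bregman
divergences for all pairs of points in `S`, then they differ by an affine function on `S`. -/
theorem bregman_eq_imp_affine_diff {n : ℕ} (S : Set (EuclideanSpace ℝ (Fin n)))
    (hSne : S.Nonempty) (hSconv : Convex ℝ S) (hSopen : IsOpen S)
    (φ₁ φ₂ : EuclideanSpace ℝ (Fin n) → ℝ)
    (g₁ g₂ : EuclideanSpace ℝ (Fin n) → EuclideanSpace ℝ (Fin n))
    (hg₁ : ∀ t ∈ S, HasGradientAt φ₁ (g₁ t) t)
    (hg₂ : ∀ t ∈ S, HasGradientAt φ₂ (g₂ t) t)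
    (hbreg : ∀ t ∈ S, ∀ t' ∈ S,
      φ₁ t - φ₁ t' - ⟪g₁ t', t - t'⟫ = φ₂ t - φ₂ t' - ⟪g₂ t', t - t'⟫) :
    ∃ (c : EuclideanSpace ℝ (Fin n)) (b : ℝ), ∀ t ∈ S, φ₁ t = φ₂ t + ⟪c, t⟫ + b := by
  obtain ⟨t₀, ht₀⟩ := hSne
  refine ⟨g₁ t₀ - g₂ t₀, φ₁ t₀ - φ₂ t₀ - ⟪g₁ t₀ - g₂ t₀, t₀⟫, fun t ht => ?_⟩
  have h := hbreg t ht t₀ ht₀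
  simp only [inner_sub_left, inner_sub_right] at h ⊢
  linarith
end

section
/- Laplace principle with almost-sure varying exponents: let S ⊂ ℝⁿ be compact with positive volume, ψ(s, x) continuous in both variables and uniformly continuous in x uniformly over s ∈ S, and let X̄_N be random vectors converging almost surely to μ. Then (1/N) log ∫_S exp(N ψ(s, X̄_N)) ds converges almost surely to max_{s∈S} ψ(s, μ). -/
open MeasureTheory Real Filter
open scoped RealInnerProductSpace

lemma laplace_det_aux {n : ℕ} (S : Set (EuclideanSpace ℝ (Fin n)))
    (hS : IsCompact S) (hSne : S.Nonempty)
    (hScl : S = closure (interior S)) (hvol : 0 < volume S)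
    (g : EuclideanSpace ℝ (Fin n) → ℝ) (hg : Continuous g) :
    Tendsto (fun N : ℕ => (1 / (N : ℝ)) * Real.log (∫ s in S, Real.exp ((N : ℝ) * g s)))
      atTop (nhds (sSup (g '' S))) := by
  obtain ⟨s₀, hs₀S, hmax⟩ := hS.exists_isMaxOn hSne hg.continuousOn
  set L := g s₀ with hLdef
  have hsup : sSup (g '' S) = L :=
    IsGreatest.csSup_eq ⟨⟨s₀, hs₀S, rfl⟩, by rintro _ ⟨s, hs, rfl⟩; exact hmax hs⟩
  rw [hsup]
  have hInt : ∀ N : ℕ, IntegrableOn (fun s => Real.exp ((N:ℝ) * g s)) S := fun N =>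
    (Real.continuous_exp.comp (continuous_const.mul hg)).continuousOn.integrableOn_compact hS
  have hvolfin : volume S < ⊤ := hS.measure_lt_top
  have hpos : ∀ N : ℕ, 0 < ∫ s in S, Real.exp ((N:ℝ) * g s) := by
    intro N
    rw [setIntegral_pos_iff_support_of_nonneg_ae
      (Filter.Eventually.of_forall fun s => (Real.exp_pos _).le) (hInt N)]
    have : Function.support (fun s => Real.exp ((N:ℝ) * g s)) = Set.univ :=
      Set.eq_univ_of_forall fun s => (Real.exp_pos _).ne'
    rw [this, Set.univ_inter]; exact hvol
  have hvolR : 0 < (volume S).toReal := ENNReal.toReal_pos hvol.ne' hvolfin.ne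
  -- upper bound
  have hup : ∀ N : ℕ, 1 ≤ N →
      (1 / (N : ℝ)) * Real.log (∫ s in S, Real.exp ((N:ℝ) * g s))
        ≤ (1 / (N : ℝ)) * Real.log ((volume S).toReal) + L := by
    intro N hN
    have hNpos : (0:ℝ) < N := by exact_mod_cast hN
    have h1 : ∫ s in S, Real.exp ((N:ℝ) * g s) ≤ (volume S).toReal * Real.exp ((N:ℝ) * L) := by
      have := setIntegral_mono_on (hInt N)
        (integrableOn_const hvolfin.ne enorm_ne_top) hS.measurableSet
        (fun s hs => Real.exp_le_exp.2 (mul_le_mul_of_nonneg_left (hmax hs) (Nat.cast_nonneg N)))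
      rwa [setIntegral_const, smul_eq_mul] at this
    have h2 : Real.log (∫ s in S, Real.exp ((N:ℝ) * g s))
        ≤ Real.log ((volume S).toReal) + (N:ℝ) * L := by
      calc Real.log (∫ s in S, Real.exp ((N:ℝ) * g s))
          ≤ Real.log ((volume S).toReal * Real.exp ((N:ℝ) * L)) := Real.log_le_log (hpos N) h1
        _ = Real.log ((volume S).toReal) + (N:ℝ) * L := by
            rw [Real.log_mul hvolR.ne' (Real.exp_ne_zero _), Real.log_exp]
    calc (1 / (N : ℝ)) * Real.log (∫ s in S, Real.exp ((N:ℝ) * g s))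
        ≤ (1 / (N : ℝ)) * (Real.log ((volume S).toReal) + (N:ℝ) * L) :=
          mul_le_mul_of_nonneg_left h2 (by positivity)
      _ = (1 / (N : ℝ)) * Real.log ((volume S).toReal) + L := by
          field_simp
  -- lower bound for each ε
  have hlow : ∀ ε : ℝ, 0 < ε → ∃ v : ℝ, 0 < v ∧ ∀ N : ℕ, 1 ≤ N →
      (1 / (N : ℝ)) * Real.log v + (L - ε)
        ≤ (1 / (N : ℝ)) * Real.log (∫ s in S, Real.exp ((N:ℝ) * g s)) := by
    intro ε hε
    set U : Set (EuclideanSpace ℝ (Fin n)) := g ⁻¹' Set.Ioi (L - ε) with hU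
    have hUopen : IsOpen U := isOpen_Ioi.preimage hg
    have hs₀U : s₀ ∈ U := by simp [hU]; linarith
    set V := U ∩ interior S with hV
    have hVopen : IsOpen V := hUopen.inter isOpen_interior
    have hVne : V.Nonempty := by
      have : s₀ ∈ closure (interior S) := hScl ▸ hs₀S
      exact mem_closure_iff.1 this U hUopen hs₀U
    have hVS : V ⊆ S := fun x hx => interior_subset hx.2
    have hvolV : 0 < volume V := hVopen.measure_pos volume hVne
    have hvolVfin : volume V < ⊤ := lt_of_le_of_lt (measure_mono hVS) hvolfin
    set v := (volume V).toReal with hv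
    have hvpos : 0 < v := ENNReal.toReal_pos hvolV.ne' hvolVfin.ne
    refine ⟨v, hvpos, fun N hN => ?_⟩
    have hNpos : (0:ℝ) < N := by exact_mod_cast hN
    have h1 : v * Real.exp ((N:ℝ) * (L - ε)) ≤ ∫ s in V, Real.exp ((N:ℝ) * g s) := by
      have := setIntegral_mono_on (integrableOn_const hvolVfin.ne enorm_ne_top)
        ((hInt N).mono_set hVS) hVopen.measurableSet
        (fun s hs => Real.exp_le_exp.2 (mul_le_mul_of_nonneg_left (le_of_lt hs.1) (Nat.cast_nonneg N)))
      rwa [setIntegral_const, smul_eq_mul] at this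
    have h2 : ∫ s in V, Real.exp ((N:ℝ) * g s) ≤ ∫ s in S, Real.exp ((N:ℝ) * g s) :=
      setIntegral_mono_set (hInt N)
        (Filter.Eventually.of_forall fun s => (Real.exp_pos _).le)
        (HasSubset.Subset.eventuallyLE hVS)
    have h3 : Real.log v + (N:ℝ) * (L - ε) ≤ Real.log (∫ s in S, Real.exp ((N:ℝ) * g s)) := by
      have : Real.log (v * Real.exp ((N:ℝ) * (L - ε)))
          ≤ Real.log (∫ s in S, Real.exp ((N:ℝ) * g s)) :=
        Real.log_le_log (by positivity) (h1.trans h2)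
      rwa [Real.log_mul hvpos.ne' (Real.exp_ne_zero _), Real.log_exp] at this
    calc (1 / (N : ℝ)) * Real.log v + (L - ε)
        = (1 / (N : ℝ)) * (Real.log v + (N:ℝ) * (L - ε)) := by field_simp
      _ ≤ (1 / (N : ℝ)) * Real.log (∫ s in S, Real.exp ((N:ℝ) * g s)) :=
          mul_le_mul_of_nonneg_left h3 (by positivity)
  -- conclude via order topology
  refine tendsto_order.2 ⟨fun a ha => ?_, fun a ha => ?_⟩
  · -- a < L : eventually a < A N
    have hε : 0 < (L - a) / 2 := by linarith
    obtain ⟨v, hvpos, hvle⟩ := hlow _ hε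
    have hC : Tendsto (fun N : ℕ => (1 / (N : ℝ)) * Real.log v + (L - (L - a) / 2))
        atTop (nhds (0 * Real.log v + (L - (L - a) / 2))) :=
      (tendsto_one_div_atTop_nhds_zero_nat.mul_const _).add_const _
    rw [zero_mul, zero_add] at hC
    have h1 : ∀ᶠ N : ℕ in atTop, a < (1 / (N : ℝ)) * Real.log v + (L - (L - a) / 2) :=
      hC.eventually_const_lt (by linarith)
    filter_upwards [h1, eventually_ge_atTop 1] with N h1 h2
    exact lt_of_lt_of_le h1 (hvle N h2)
  · -- L < a
    have hB : Tendsto (fun N : ℕ => (1 / (N : ℝ)) * Real.log ((volume S).toReal) + L)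
        atTop (nhds (0 * Real.log ((volume S).toReal) + L)) :=
      (tendsto_one_div_atTop_nhds_zero_nat.mul_const _).add_const _
    rw [zero_mul, zero_add] at hB
    filter_upwards [hB.eventually_lt_const ha, eventually_ge_atTop 1] with N h1 h2
    exact lt_of_le_of_lt (hup N h2) h1

/-- Laplace principle with almost-surely varying exponents: if `X̄_N → μ₀` almost surely and
`ψ` is continuous, Lipschitz in its second argument uniformly over `s ∈ S`, then
`(1/N) log ∫_S exp (N ψ(s, X̄_N)) ds → max_{s ∈ S} ψ(s, μ₀)` almost surely. -/
theorem laplace_principle_as {n m : ℕ} {Ω : Type*} [MeasurableSpace Ω]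
    (P : Measure Ω) [IsProbabilityMeasure P]
    (S : Set (EuclideanSpace ℝ (Fin n)))
    (hS : IsCompact S) (hSne : S.Nonempty)
    (hScl : S = closure (interior S)) (hvol : 0 < volume S)
    (ψ : EuclideanSpace ℝ (Fin n) → EuclideanSpace ℝ (Fin m) → ℝ)
    (hψ : Continuous (fun p : EuclideanSpace ℝ (Fin n) × EuclideanSpace ℝ (Fin m) =>
      ψ p.1 p.2))
    (M : ℝ)
    (hLip : ∀ s ∈ S, ∀ x₁ x₂ : EuclideanSpace ℝ (Fin m),
      |ψ s x₁ - ψ s x₂| ≤ M * ‖x₁ - x₂‖)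
    (Xbar : ℕ → Ω → EuclideanSpace ℝ (Fin m)) (μ₀ : EuclideanSpace ℝ (Fin m))
    (hconv : ∀ᵐ ω ∂P, Tendsto (fun N => Xbar N ω) atTop (nhds μ₀)) :
    ∀ᵐ ω ∂P,
      Tendsto (fun N : ℕ =>
          (1 / (N : ℝ)) * Real.log (∫ s in S, Real.exp ((N : ℝ) * ψ s (Xbar N ω))))
        atTop (nhds (sSup ((fun s => ψ s μ₀) '' S))) := by
  -- notation
  set A : ℕ → EuclideanSpace ℝ (Fin m) → ℝ := fun N x =>
    (1 / (N : ℝ)) * Real.log (∫ s in S, Real.exp ((N : ℝ) * ψ s x)) with hA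
  have hvolfin : volume S < ⊤ := hS.measure_lt_top
  have hcontx : ∀ x : EuclideanSpace ℝ (Fin m), Continuous (fun s => ψ s x) :=
    fun x => hψ.comp (continuous_id.prodMk continuous_const)
  have hInt : ∀ (N : ℕ) (x : EuclideanSpace ℝ (Fin m)),
      IntegrableOn (fun s => Real.exp ((N:ℝ) * ψ s x)) S := fun N x =>
    (Real.continuous_exp.comp (continuous_const.mul (hcontx x))).continuousOn.integrableOn_compact hS
  have hpos : ∀ (N : ℕ) (x : EuclideanSpace ℝ (Fin m)),
      0 < ∫ s in S, Real.exp ((N:ℝ) * ψ s x) := by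
    intro N x
    rw [setIntegral_pos_iff_support_of_nonneg_ae
      (Filter.Eventually.of_forall fun s => (Real.exp_pos _).le) (hInt N x)]
    have : Function.support (fun s => Real.exp ((N:ℝ) * ψ s x)) = Set.univ :=
      Set.eq_univ_of_forall fun s => (Real.exp_pos _).ne'
    rw [this, Set.univ_inter]; exact hvol
  -- one-sided comparison of logs of integrals
  have hlogle : ∀ (N : ℕ) (x y : EuclideanSpace ℝ (Fin m)),
      Real.log (∫ s in S, Real.exp ((N:ℝ) * ψ s x))
        ≤ (N:ℝ) * (M * ‖x - y‖) + Real.log (∫ s in S, Real.exp ((N:ℝ) * ψ s y)) := by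
    intro N x y
    have hpt : ∀ s ∈ S, Real.exp ((N:ℝ) * ψ s x)
        ≤ Real.exp ((N:ℝ) * (M * ‖x - y‖)) * Real.exp ((N:ℝ) * ψ s y) := by
      intro s hs
      rw [← Real.exp_add]
      apply Real.exp_le_exp.2
      have h := (abs_le.1 (hLip s hs x y)).2
      have : ψ s x ≤ M * ‖x - y‖ + ψ s y := by linarith
      calc (N:ℝ) * ψ s x ≤ (N:ℝ) * (M * ‖x - y‖ + ψ s y) :=
            mul_le_mul_of_nonneg_left this (Nat.cast_nonneg N)
        _ = (N:ℝ) * (M * ‖x - y‖) + (N:ℝ) * ψ s y := by ring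
    have hI : ∫ s in S, Real.exp ((N:ℝ) * ψ s x)
        ≤ Real.exp ((N:ℝ) * (M * ‖x - y‖)) * ∫ s in S, Real.exp ((N:ℝ) * ψ s y) := by
      have := setIntegral_mono_on (hInt N x) ((hInt N y).const_mul _) hS.measurableSet hpt
      rwa [integral_const_mul] at this
    have := Real.log_le_log (hpos N x) hI
    rwa [Real.log_mul (Real.exp_ne_zero _) (hpos N y).ne', Real.log_exp] at this
  -- A is uniformly Lipschitz (for N ≥ 1)
  have hAlip : ∀ (N : ℕ), 1 ≤ N → ∀ x y : EuclideanSpace ℝ (Fin m),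
      |A N x - A N y| ≤ M * ‖x - y‖ := by
    intro N hN x y
    have hNpos : (0:ℝ) < N := by exact_mod_cast hN
    have h1 := hlogle N x y
    have h2 := hlogle N y x
    rw [norm_sub_rev y x] at h2
    have habs : |Real.log (∫ s in S, Real.exp ((N:ℝ) * ψ s x))
        - Real.log (∫ s in S, Real.exp ((N:ℝ) * ψ s y))| ≤ (N:ℝ) * (M * ‖x - y‖) :=
      abs_sub_le_iff.2 ⟨by linarith, by linarith⟩
    have : |A N x - A N y| = (1 / (N:ℝ)) * |Real.log (∫ s in S, Real.exp ((N:ℝ) * ψ s x))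
        - Real.log (∫ s in S, Real.exp ((N:ℝ) * ψ s y))| := by
      rw [hA]; simp only []
      rw [← mul_sub, abs_mul, abs_of_pos (by positivity : (0:ℝ) < 1 / (N:ℝ))]
    rw [this]
    calc (1 / (N:ℝ)) * |_| ≤ (1 / (N:ℝ)) * ((N:ℝ) * (M * ‖x - y‖)) :=
          mul_le_mul_of_nonneg_left habs (by positivity)
      _ = M * ‖x - y‖ := by field_simp
  -- deterministic part
  have hdet : Tendsto (fun N : ℕ => A N μ₀) atTop (nhds (sSup ((fun s => ψ s μ₀) '' S))) :=
    laplace_det_aux S hS hSne hScl hvol (fun s => ψ s μ₀) (hcontx μ₀)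
  -- main a.s. argument
  filter_upwards [hconv] with ω hω
  have hdist : Tendsto (fun N : ℕ => M * ‖Xbar N ω - μ₀‖) atTop (nhds (M * 0)) := by
    apply Tendsto.const_mul
    have := hω
    rw [tendsto_iff_norm_sub_tendsto_zero] at this
    exact this
  rw [mul_zero] at hdist
  have hdiff : Tendsto (fun N : ℕ => A N (Xbar N ω) - A N μ₀) atTop (nhds 0) := by
    apply squeeze_zero_norm' _ hdist
    filter_upwards [eventually_ge_atTop 1] with N hN
    exact hAlip N hN (Xbar N ω) μ₀
  have := hdiff.add hdet
  rw [zero_add] at this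
  convert this using 2 with N
  simp [hA]
end

section
/- Posterior concentration for exponential families (pointwise form): let the likelihood be p(x|t) = exp(⟨t, f(x)⟩ - log Z(t)) on a compact parameter set S ⊂ ℝⁿ with uniform prior, and suppose x₁,...,x_N are i.i.d. samples from p(·|t'). If the empirical mean (1/N)∑f(x_i) converges almost surely to ∇log Z(t'), then for every t ∈ S, the N-th root of the posterior density p(t|x₁,...,x_N)^{1/N} converges almost surely to exp(-D_{log Z}(t, t')), where D_{log Z}(t, t') = log Z(t) - log Z(t') - ⟨∇log Z(t'), t - t'⟩. -/
open MeasureTheory Real Filter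
open scoped RealInnerProductSpace

lemma grad_ineq {n : ℕ} {S : Set (EuclideanSpace ℝ (Fin n))}
    {logZ : EuclideanSpace ℝ (Fin n) → ℝ}
    (hconv : ConvexOn ℝ S logZ)
    {t' : EuclideanSpace ℝ (Fin n)} (ht'S : t' ∈ S)
    {g : EuclideanSpace ℝ (Fin n)} (hg : HasGradientAt logZ g t')
    {s : EuclideanSpace ℝ (Fin n)} (hs : s ∈ S) :
    ⟪g, s - t'⟫ ≤ logZ s - logZ t' := by
  set v := s - t' with hv
  have hc : HasDerivAt (fun θ : ℝ => t' + θ • v) v 0 := by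
    simpa using ((hasDerivAt_id (0:ℝ)).smul_const v).const_add t'
  have hd : HasDerivAt (fun θ : ℝ => logZ (t' + θ • v)) ⟪g, v⟫ 0 := by
    have h0 : t' + (0:ℝ) • v = t' := by simp
    have hf := hg.hasFDerivAt
    rw [← h0] at hf
    have := hf.comp_hasDerivAt (0:ℝ) hc
    simp [Function.comp, InnerProductSpace.toDual_apply_apply] at this
    exact this
  have hslope : Tendsto (slope (fun θ : ℝ => logZ (t' + θ • v)) 0)
      (nhdsWithin 0 (Set.Ioi 0)) (nhds ⟪g, v⟫) :=
    (hasDerivAt_iff_tendsto_slope.1 hd).mono_left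
      (nhdsWithin_mono 0 (fun x hx => ne_of_gt hx))
  refine le_of_tendsto hslope ?_
  filter_upwards [Ioc_mem_nhdsGT_of_mem (Set.mem_Ico.2 ⟨le_refl _, zero_lt_one⟩)]
    with θ hθ
  obtain ⟨hθ0, hθ1⟩ := hθ
  have hineq : logZ (t' + θ • v) ≤ (1 - θ) * logZ t' + θ * logZ s := by
    have := hconv.2 ht'S hs (by linarith : (0:ℝ) ≤ 1 - θ) (le_of_lt hθ0)
      (by ring)
    have heq : (1 - θ) • t' + θ • s = t' + θ • v := by
      rw [hv]; module
    rw [heq] at this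
    simpa using this
  rw [slope_def_field]
  simp only [sub_zero, zero_smul, add_zero]
  rw [div_le_iff₀ hθ0]
  nlinarith [hineq]

lemma laplace_aux {n : ℕ} {S : Set (EuclideanSpace ℝ (Fin n))}
    (hS : IsCompact S) (hvol : 0 < volume S)
    {logZ : EuclideanSpace ℝ (Fin n) → ℝ} (hcont : ContinuousOn logZ S)
    {t' : EuclideanSpace ℝ (Fin n)} (ht' : t' ∈ interior S)
    {g : EuclideanSpace ℝ (Fin n)}
    (hmax : ∀ s ∈ S, ⟪s, g⟫ - logZ s ≤ ⟪t', g⟫ - logZ t')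
    (m : ℕ → EuclideanSpace ℝ (Fin n)) (hm : Tendsto m atTop (nhds g)) :
    Tendsto (fun N : ℕ => ((N : ℝ))⁻¹ *
      Real.log (∫ s in S, Real.exp ((N : ℝ) * (⟪s, m N⟫ - logZ s)))) atTop
      (nhds (⟪t', g⟫ - logZ t')) := by
  set M : ℝ := ⟪t', g⟫ - logZ t' with hM
  set J : ℕ → ℝ := fun N => ∫ s in S, Real.exp ((N : ℝ) * (⟪s, m N⟫ - logZ s)) with hJ
  obtain ⟨R, hR0, hRS⟩ := hS.isBounded.subset_closedBall_lt 0 0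
  have hR : ∀ s ∈ S, ‖s‖ ≤ R := fun s hs => mem_closedBall_zero_iff.1 (hRS hs)
  set ε : ℕ → ℝ := fun N => R * ‖m N - g‖ with hε
  have hε0 : Tendsto ε atTop (nhds 0) := by
    have : Tendsto (fun N => ‖m N - g‖) atTop (nhds 0) := by
      simpa using ((hm.sub_const g).norm)
    simpa using this.const_mul R
  -- pointwise comparison
  have hcomp : ∀ N : ℕ, ∀ s ∈ S, |(⟪s, m N⟫ - logZ s) - (⟪s, g⟫ - logZ s)| ≤ ε N := by
    intro N s hs
    have : (⟪s, m N⟫ - logZ s) - (⟪s, g⟫ - logZ s) = ⟪s, m N - g⟫ := by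
      rw [inner_sub_right]; ring
    rw [this]
    calc |⟪s, m N - g⟫| ≤ ‖s‖ * ‖m N - g‖ := abs_real_inner_le_norm _ _
      _ ≤ R * ‖m N - g‖ := by
          exact mul_le_mul_of_nonneg_right (hR s hs) (norm_nonneg _)
  -- integrability
  have hcint : ∀ N : ℕ, ContinuousOn
      (fun s => Real.exp ((N : ℝ) * (⟪s, m N⟫ - logZ s))) S := by
    intro N
    exact Real.continuous_exp.comp_continuousOn
      (continuousOn_const.mul
        (((continuous_id.inner continuous_const).continuousOn).sub hcont))
  have hint : ∀ N : ℕ, IntegrableOn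
      (fun s => Real.exp ((N : ℝ) * (⟪s, m N⟫ - logZ s))) S volume :=
    fun N => (hcint N).integrableOn_compact hS
  have hJpos : ∀ N : ℕ, 0 < J N := by
    intro N
    rw [hJ]
    rw [setIntegral_pos_iff_support_of_nonneg_ae
      (Filter.Eventually.of_forall (fun s => (Real.exp_pos _).le)) (hint N)]
    have : (Function.support fun s => Real.exp ((N : ℝ) * (⟪s, m N⟫ - logZ s)))
        = Set.univ := by
      ext s; simp [Function.support, (Real.exp_pos _).ne']
    rw [this, Set.univ_inter]
    exact hvol
  have hvolS : 0 < (volume S).toReal :=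
    ENNReal.toReal_pos hvol.ne' hS.measure_lt_top.ne
  -- upper bound
  have hub : ∀ N : ℕ, J N ≤ (volume S).toReal * Real.exp ((N : ℝ) * (M + ε N)) := by
    intro N
    have h1 : J N ≤ ∫ _ in S, Real.exp ((N : ℝ) * (M + ε N)) := by
      refine setIntegral_mono_on (hint N) ?_ hS.measurableSet ?_
      · exact integrableOn_const hS.measure_lt_top.ne
      · intro s hs
        refine Real.exp_le_exp.2 (mul_le_mul_of_nonneg_left ?_ (Nat.cast_nonneg N))
        have h2 := hcomp N s hs
        have h3 := hmax s hs
        have := abs_le.1 h2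
        linarith [this.2]
    rw [setIntegral_const, smul_eq_mul] at h1
    exact h1
  have hLub : ∀ N : ℕ, 1 ≤ N →
      (N : ℝ)⁻¹ * Real.log (J N) ≤
        (N : ℝ)⁻¹ * Real.log ((volume S).toReal) + (M + ε N) := by
    intro N hN
    have hNpos : (0:ℝ) < N := by exact_mod_cast hN
    have h1 : Real.log (J N) ≤ Real.log ((volume S).toReal) + (N : ℝ) * (M + ε N) := by
      calc Real.log (J N) ≤ Real.log ((volume S).toReal * Real.exp ((N : ℝ) * (M + ε N))) :=
            Real.log_le_log (hJpos N) (hub N)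
        _ = Real.log ((volume S).toReal) + (N : ℝ) * (M + ε N) := by
            rw [Real.log_mul hvolS.ne' (Real.exp_pos _).ne', Real.log_exp]
    calc (N : ℝ)⁻¹ * Real.log (J N)
        ≤ (N : ℝ)⁻¹ * (Real.log ((volume S).toReal) + (N : ℝ) * (M + ε N)) :=
          mul_le_mul_of_nonneg_left h1 (inv_nonneg.2 hNpos.le)
      _ = (N : ℝ)⁻¹ * Real.log ((volume S).toReal) + (M + ε N) := by
          field_simp
  refine tendsto_order.2 ⟨?_, ?_⟩
  · -- lower bound
    intro a ha
    set ε' : ℝ := (M - a) / 2 with hε'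
    have hε'pos : 0 < ε' := by rw [hε']; linarith
    have hSnhds : S ∈ nhds t' := mem_interior_iff_mem_nhds.1 ht'
    have hφcont : ContinuousAt (fun s : EuclideanSpace ℝ (Fin n) => ⟪s, g⟫ - logZ s) t' :=
      ((continuous_id.inner continuous_const).continuousAt).sub
        (hcont.continuousAt hSnhds)
    have h1 : ∀ᶠ s in nhds t', (⟪s, g⟫ - logZ s) > M - ε' := by
      have : Set.Ioi (M - ε') ∈ nhds M := Ioi_mem_nhds (by linarith)
      exact hφcont.eventually_mem this
    have h2 : ∀ᶠ s in nhds t', s ∈ S := hSnhds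
    obtain ⟨δ, hδpos, hδ⟩ := Metric.eventually_nhds_iff_ball.1 (h1.and h2)
    set B : Set (EuclideanSpace ℝ (Fin n)) := Metric.closedBall t' (δ / 2) with hB
    have hBball : B ⊆ Metric.ball t' δ := by
      rw [hB]
      exact Metric.closedBall_subset_ball (by linarith)
    have hBS : B ⊆ S := fun s hs => (hδ s (hBball hs)).2
    have hvolB : 0 < (volume B).toReal :=
      ENNReal.toReal_pos
        (Metric.measure_closedBall_pos volume t' (by linarith)).ne'
        measure_closedBall_lt_top.ne
    have hlbJ : ∀ N : ℕ,
        (volume B).toReal * Real.exp ((N : ℝ) * (M - ε' - ε N)) ≤ J N := by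
      intro N
      have step1 : ∫ _ in B, Real.exp ((N : ℝ) * (M - ε' - ε N))
          ≤ ∫ s in B, Real.exp ((N : ℝ) * (⟪s, m N⟫ - logZ s)) := by
        refine setIntegral_mono_on
          (integrableOn_const measure_closedBall_lt_top.ne)
          ((hint N).mono_set hBS) Metric.isClosed_closedBall.measurableSet ?_
        intro s hs
        refine Real.exp_le_exp.2 (mul_le_mul_of_nonneg_left ?_ (Nat.cast_nonneg N))
        have hφ : (⟪s, g⟫ - logZ s) > M - ε' := (hδ s (hBball hs)).1
        have h3 := abs_le.1 (hcomp N s (hBS hs))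
        linarith [h3.1]
      have step2 : ∫ s in B, Real.exp ((N : ℝ) * (⟪s, m N⟫ - logZ s))
          ≤ J N := by
        rw [hJ]
        refine setIntegral_mono_set (hint N)
          (Filter.Eventually.of_forall (fun s => (Real.exp_pos _).le))
          (HasSubset.Subset.eventuallyLE hBS)
      rw [setIntegral_const, smul_eq_mul, measureReal_def] at step1
      linarith
    have hLlb : ∀ N : ℕ, 1 ≤ N →
        (N : ℝ)⁻¹ * Real.log ((volume B).toReal) + (M - ε' - ε N) ≤
          (N : ℝ)⁻¹ * Real.log (J N) := by
      intro N hN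
      have hNpos : (0:ℝ) < N := by exact_mod_cast hN
      have h1 : Real.log ((volume B).toReal) + (N : ℝ) * (M - ε' - ε N)
          ≤ Real.log (J N) := by
        calc Real.log ((volume B).toReal) + (N : ℝ) * (M - ε' - ε N)
            = Real.log ((volume B).toReal * Real.exp ((N : ℝ) * (M - ε' - ε N))) := by
              rw [Real.log_mul hvolB.ne' (Real.exp_pos _).ne', Real.log_exp]
          _ ≤ Real.log (J N) := Real.log_le_log (by positivity) (hlbJ N)
      calc (N : ℝ)⁻¹ * Real.log ((volume B).toReal) + (M - ε' - ε N)
          = (N : ℝ)⁻¹ * (Real.log ((volume B).toReal) + (N : ℝ) * (M - ε' - ε N)) := by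
            field_simp
        _ ≤ (N : ℝ)⁻¹ * Real.log (J N) :=
            mul_le_mul_of_nonneg_left h1 (inv_nonneg.2 hNpos.le)
    have hLow : Tendsto
        (fun N : ℕ => (N : ℝ)⁻¹ * Real.log ((volume B).toReal) + (M - ε' - ε N))
        atTop (nhds (0 * Real.log ((volume B).toReal) + (M - ε' - 0))) :=
      ((tendsto_inv_atTop_nhds_zero_nat.mul_const _)).add
        ((tendsto_const_nhds.sub hε0))
    rw [zero_mul, zero_add, sub_zero] at hLow
    have haM : a < M - ε' := by rw [hε']; linarith
    filter_upwards [(tendsto_order.1 hLow).1 a haM, eventually_ge_atTop 1]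
      with N h1 h2
    exact lt_of_lt_of_le h1 (hLlb N h2)
  · intro b hb
    have hU : Tendsto (fun N : ℕ => (N : ℝ)⁻¹ * Real.log ((volume S).toReal) + (M + ε N))
        atTop (nhds (0 * Real.log ((volume S).toReal) + (M + 0))) :=
      ((tendsto_inv_atTop_nhds_zero_nat.mul_const _)).add
        (tendsto_const_nhds.add hε0)
    rw [zero_mul, zero_add, add_zero] at hU
    filter_upwards [(tendsto_order.1 hU).2 b hb, eventually_ge_atTop 1]
      with N h1 h2
    exact lt_of_le_of_lt (hLub N h2) h1

/-- Posterior concentration for exponential families (pointwise form): if the empirical mean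
of the sufficient statistic converges almost surely to `∇ log Z (t')`, then the `N`-th root
of the Bayes posterior density under a uniform prior on the compact set `S` converges almost
surely to `exp (-D_{log Z}(t, t'))`. -/
theorem posterior_concentration {n : ℕ} {X : Type*} [MeasurableSpace X] {Ω : Type*}
    [MeasurableSpace Ω] (P : Measure Ω) [IsProbabilityMeasure P]
    (S : Set (EuclideanSpace ℝ (Fin n)))
    (hS : IsCompact S) (hScl : S = closure (interior S)) (hvol : 0 < volume S)
    (logZ : EuclideanSpace ℝ (Fin n) → ℝ)
    (hconv : ConvexOn ℝ S logZ) (hcont : ContinuousOn logZ S)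
    (t' : EuclideanSpace ℝ (Fin n)) (ht' : t' ∈ interior S)
    (g : EuclideanSpace ℝ (Fin n)) (hg : HasGradientAt logZ g t')
    (f : X → EuclideanSpace ℝ (Fin n)) (xs : ℕ → Ω → X)
    (hmean : ∀ᵐ ω ∂P,
      Tendsto (fun N : ℕ => (N : ℝ)⁻¹ • ∑ i ∈ Finset.range N, f (xs i ω))
        atTop (nhds g))
    (post : ℕ → Ω → EuclideanSpace ℝ (Fin n) → ℝ)
    (hpost : ∀ N ω t, post N ω t =
      Real.exp ((∑ i ∈ Finset.range N, ⟪t, f (xs i ω)⟫) - (N : ℝ) * logZ t) /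
        ∫ s in S, Real.exp ((∑ i ∈ Finset.range N, ⟪s, f (xs i ω)⟫) - (N : ℝ) * logZ s)) :
    ∀ t ∈ S, ∀ᵐ ω ∂P,
      Tendsto (fun N : ℕ => (post N ω t) ^ ((N : ℝ)⁻¹)) atTop
        (nhds (Real.exp (-(logZ t - logZ t' - ⟪g, t - t'⟫)))) := by
  intro t ht
  filter_upwards [hmean] with ω hmω
  set m : ℕ → EuclideanSpace ℝ (Fin n) :=
    fun N => (N : ℝ)⁻¹ • ∑ i ∈ Finset.range N, f (xs i ω) with hm
  have hmax : ∀ s ∈ S, ⟪s, g⟫ - logZ s ≤ ⟪t', g⟫ - logZ t' := by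
    intro s hs
    have := grad_ineq hconv (interior_subset ht') hg hs
    have h2 : ⟪g, s - t'⟫ = ⟪s, g⟫ - ⟪t', g⟫ := by
      rw [inner_sub_right, real_inner_comm g s, real_inner_comm g t']
    linarith [h2 ▸ this]
  have hL := laplace_aux hS hvol hcont ht' hmax m hmω
  -- identify the integrands
  have hsum : ∀ N : ℕ, 1 ≤ N → ∀ s : EuclideanSpace ℝ (Fin n),
      (∑ i ∈ Finset.range N, ⟪s, f (xs i ω)⟫) - (N : ℝ) * logZ s
        = (N : ℝ) * (⟪s, m N⟫ - logZ s) := by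
    intro N hN s
    have hNpos : (0:ℝ) < N := by exact_mod_cast hN
    have h1 : ⟪s, m N⟫ = (N : ℝ)⁻¹ * ∑ i ∈ Finset.range N, ⟪s, f (xs i ω)⟫ := by
      rw [hm]
      simp [inner_smul_right, inner_sum]
    rw [h1]
    field_simp
  set J : ℕ → ℝ := fun N => ∫ s in S,
    Real.exp ((∑ i ∈ Finset.range N, ⟪s, f (xs i ω)⟫) - (N : ℝ) * logZ s) with hJ
  have hJeq : ∀ N : ℕ, 1 ≤ N →
      J N = ∫ s in S, Real.exp ((N : ℝ) * (⟪s, m N⟫ - logZ s)) := by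
    intro N hN
    rw [hJ]
    exact setIntegral_congr_fun hS.measurableSet fun s _ => by rw [hsum N hN s]
  have hint : ∀ N : ℕ, IntegrableOn
      (fun s => Real.exp ((∑ i ∈ Finset.range N, ⟪s, f (xs i ω)⟫) - (N : ℝ) * logZ s))
      S volume := by
    intro N
    refine (Real.continuous_exp.comp_continuousOn ?_).integrableOn_compact hS
    refine ContinuousOn.sub ?_ (continuousOn_const.mul hcont)
    exact Continuous.continuousOn
      (continuous_finset_sum _ fun i _ => continuous_id.inner continuous_const)
  have hJpos : ∀ N : ℕ, 0 < J N := by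
    intro N
    rw [hJ]
    rw [setIntegral_pos_iff_support_of_nonneg_ae
      (Filter.Eventually.of_forall (fun s => (Real.exp_pos _).le)) (hint N)]
    have : (Function.support fun s =>
        Real.exp ((∑ i ∈ Finset.range N, ⟪s, f (xs i ω)⟫) - (N : ℝ) * logZ s))
        = Set.univ := by
      ext s; simp [Function.support, (Real.exp_pos _).ne']
    rw [this, Set.univ_inter]
    exact hvol
  have hL' : Tendsto (fun N : ℕ => (N : ℝ)⁻¹ * Real.log (J N)) atTop
      (nhds (⟪t', g⟫ - logZ t')) := by
    refine hL.congr' ?_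
    filter_upwards [eventually_ge_atTop 1] with N hN
    rw [hJeq N hN]
  have h2 : ⟪g, t - t'⟫ = ⟪t, g⟫ - ⟪t', g⟫ := by
    rw [inner_sub_right, real_inner_comm g t, real_inner_comm g t']
  have hlim : Real.exp (-(logZ t - logZ t' - ⟪g, t - t'⟫))
      = Real.exp ((⟪t, g⟫ - logZ t) - (⟪t', g⟫ - logZ t')) := by
    rw [h2]; ring_nf
  rw [hlim]
  have htend : Tendsto
      (fun N : ℕ => Real.exp ((⟪t, m N⟫ - logZ t) - (N : ℝ)⁻¹ * Real.log (J N)))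
      atTop (nhds (Real.exp ((⟪t, g⟫ - logZ t) - (⟪t', g⟫ - logZ t')))) := by
    refine Real.continuous_exp.continuousAt.tendsto.comp ?_
    exact ((tendsto_const_nhds.inner hmω).sub_const _).sub hL'
  refine htend.congr' ?_
  filter_upwards [eventually_ge_atTop 1] with N hN
  have hNpos : (0:ℝ) < N := by exact_mod_cast hN
  rw [hpost N ω t]
  set A : ℝ := (∑ i ∈ Finset.range N, ⟪t, f (xs i ω)⟫) - (N : ℝ) * logZ t with hA
  have hdiv : (Real.exp A / J N) ^ ((N:ℝ)⁻¹)
      = (Real.exp A) ^ ((N:ℝ)⁻¹) / (J N) ^ ((N:ℝ)⁻¹) :=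
    Real.div_rpow (Real.exp_pos _).le (hJpos N).le _
  have hnum : (Real.exp A) ^ ((N:ℝ)⁻¹) = Real.exp (⟪t, m N⟫ - logZ t) := by
    rw [← Real.exp_mul]
    congr 1
    rw [hA, hsum N hN t]
    field_simp
  have hden : (J N) ^ ((N:ℝ)⁻¹) = Real.exp ((N:ℝ)⁻¹ * Real.log (J N)) := by
    rw [Real.rpow_def_of_pos (hJpos N), mul_comm]
  rw [Real.exp_sub]
  show Real.exp (⟪t, m N⟫ - logZ t) / Real.exp ((N:ℝ)⁻¹ * Real.log (J N))
      = (Real.exp A / J N) ^ ((N:ℝ)⁻¹)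
  rw [hdiv, hnum, hden]
end

section
/- Deterministic version of the posterior limit: let S ⊂ ℝⁿ be compact with positive volume, φ = log Z convex, continuous on S, and differentiable at an interior point t'. Define g_N(t) = exp(N[⟨t, m⟩ - φ(t)]) / ∫_S exp(N[⟨s, m⟩ - φ(s)]) ds with m = ∇φ(t'). Then for every t ∈ S, g_N(t)^{1/N} → exp(-D_φ(t, t')) as N → ∞, where D_φ(t, t') = φ(t) - φ(t') - ⟨∇φ(t'), t - t'⟩. -/
open MeasureTheory Real Filter
open scoped RealInnerProductSpace
open scoped Topology

/-- Deterministic version of the posterior limit: with `m = ∇φ(t')`, the `N`-th root of the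
normalized density `g_N(t) = exp (N (⟪t, m⟫ - φ t)) / ∫_S exp (N (⟪s, m⟫ - φ s)) ds`
converges to `exp (-D_φ(t, t'))`. -/
theorem posterior_limit_deterministic {n : ℕ}
    (S : Set (EuclideanSpace ℝ (Fin n)))
    (hS : IsCompact S) (hScl : S = closure (interior S)) (hvol : 0 < volume S)
    (φ : EuclideanSpace ℝ (Fin n) → ℝ)
    (hconv : ConvexOn ℝ S φ) (hcont : ContinuousOn φ S)
    (t' : EuclideanSpace ℝ (Fin n)) (ht' : t' ∈ interior S)
    (m : EuclideanSpace ℝ (Fin n)) (hm : HasGradientAt φ m t')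
    (gN : ℕ → EuclideanSpace ℝ (Fin n) → ℝ)
    (hgN : ∀ N t, gN N t =
      Real.exp ((N : ℝ) * (⟪t, m⟫ - φ t)) /
        ∫ s in S, Real.exp ((N : ℝ) * (⟪s, m⟫ - φ s))) :
    ∀ t ∈ S,
      Tendsto (fun N : ℕ => (gN N t) ^ ((N : ℝ)⁻¹)) atTop
        (nhds (Real.exp (-(φ t - φ t' - ⟪m, t - t'⟫)))) := by
  intro t ht
  have ht'S : t' ∈ S := interior_subset ht'
  set f : EuclideanSpace ℝ (Fin n) → ℝ := fun s => ⟪s, m⟫ - φ s with hf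
  set M : ℝ := ⟪t', m⟫ - φ t' with hMdef
  set I : ℕ → ℝ := fun N => ∫ s in S, Real.exp ((N : ℝ) * (⟪s, m⟫ - φ s)) with hI
  -- gradient inequality: φ s ≥ φ t' + ⟪m, s - t'⟫ on S
  have hgrad : ∀ s ∈ S, ⟪m, s - t'⟫ ≤ φ s - φ t' := by
    intro s hs
    have hline : HasDerivAt (fun τ : ℝ => t' + τ • (s - t')) (s - t') 0 := by
      simpa using ((hasDerivAt_id (0 : ℝ)).smul_const (s - t')).const_add t'
    have hcomp : HasDerivAt (fun τ : ℝ => φ (t' + τ • (s - t'))) ⟪m, s - t'⟫ 0 := by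
      have hm' : HasFDerivAt φ ((InnerProductSpace.toDual ℝ (EuclideanSpace ℝ (Fin n))) m)
          ((fun τ : ℝ => t' + τ • (s - t')) 0) := by simpa using hm.hasFDerivAt
      have h := hm'.comp_hasDerivAt 0 hline
      simp at h
      exact h
    have hslope := hasDerivAt_iff_tendsto_slope.1 hcomp
    have hmono : 𝓝[>] (0 : ℝ) ≤ 𝓝[≠] (0 : ℝ) :=
      nhdsWithin_mono _ (fun x hx => ne_of_gt hx)
    refine le_of_tendsto (hslope.mono_left hmono) ?_
    filter_upwards [Ioc_mem_nhdsGT (zero_lt_one)] with τ hτ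
    have hτ0 : (0 : ℝ) < τ := hτ.1
    have hseg : φ (t' + τ • (s - t')) ≤ (1 - τ) * φ t' + τ * φ s := by
      have hpt : t' + τ • (s - t') = (1 - τ) • t' + τ • s := by module
      rw [hpt]
      exact hconv.2 ht'S hs (by linarith [hτ.2]) hτ0.le (by ring)
    have hsl : slope (fun τ : ℝ => φ (t' + τ • (s - t'))) 0 τ =
        (φ (t' + τ • (s - t')) - φ t') / τ := by
      rw [slope_def_field]; simp
    rw [hsl, div_le_iff₀ hτ0]
    nlinarith [hseg]
  have hmax : ∀ s ∈ S, f s ≤ M := by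
    intro s hs
    have h2 : ⟪m, s - t'⟫ = ⟪s, m⟫ - ⟪t', m⟫ := by
      rw [inner_sub_right, real_inner_comm m s, real_inner_comm m t']
    have := hgrad s hs
    simp only [hf, hMdef]
    linarith [h2 ▸ this]
  -- continuity and integrability
  have hfc : ContinuousOn f S :=
    (continuous_id.inner continuous_const).continuousOn.sub hcont
  have hInt : ∀ N : ℕ, IntegrableOn (fun s => Real.exp ((N : ℝ) * f s)) S := by
    intro N
    exact (Real.continuous_exp.comp_continuousOn (continuousOn_const.mul hfc)).integrableOn_compact hS
  have hIeq : ∀ N : ℕ, I N = ∫ s in S, Real.exp ((N : ℝ) * f s) := fun N => rfl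
  -- lower bound
  have hlow : ∀ ε > (0:ℝ), ∃ c > (0:ℝ), ∀ N : ℕ,
      c * Real.exp ((N : ℝ) * (M - ε)) ≤ I N := by
    intro ε hε
    have hfct' : ContinuousAt f t' :=
      ((continuous_id.inner continuous_const).continuousAt).sub hm.hasFDerivAt.continuousAt
    have hft' : f t' = M := rfl
    have h1 : {x | M - ε < f x} ∈ 𝓝 t' := by
      have : Set.Ioi (M - ε) ∈ 𝓝 (f t') := Ioi_mem_nhds (by rw [hft']; linarith)
      exact hfct' this
    have h2 : interior S ∈ 𝓝 t' := isOpen_interior.mem_nhds ht'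
    obtain ⟨δ, hδpos, hδ⟩ := Metric.mem_nhds_iff.1 (inter_mem h1 h2)
    have hballS : Metric.ball t' δ ⊆ S := fun x hx => interior_subset (hδ hx).2
    have hballf : ∀ x ∈ Metric.ball t' δ, M - ε ≤ f x := fun x hx => ((hδ hx).1 : _).le
    refine ⟨(volume (Metric.ball t' δ)).toReal, ?_, ?_⟩
    · exact ENNReal.toReal_pos (Metric.measure_ball_pos volume t' hδpos).ne' measure_ball_lt_top.ne
    intro N
    rw [hIeq]
    calc (volume (Metric.ball t' δ)).toReal * Real.exp ((N : ℝ) * (M - ε))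
        = ∫ _ in Metric.ball t' δ, Real.exp ((N : ℝ) * (M - ε)) := by
          rw [setIntegral_const, smul_eq_mul]; rfl
      _ ≤ ∫ s in Metric.ball t' δ, Real.exp ((N : ℝ) * f s) := by
          refine setIntegral_mono_on (integrableOn_const measure_ball_lt_top.ne)
            ((hInt N).mono_set hballS) measurableSet_ball ?_
          intro x hx
          exact Real.exp_le_exp.2 (mul_le_mul_of_nonneg_left (hballf x hx) (Nat.cast_nonneg N))
      _ ≤ ∫ s in S, Real.exp ((N : ℝ) * f s) := by
          refine setIntegral_mono_set (hInt N) ?_ (HasSubset.Subset.eventuallyLE hballS)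
          exact Filter.Eventually.of_forall (fun x => (Real.exp_pos _).le)
  -- upper bound
  have hVS : 0 < (volume S).toReal :=
    ENNReal.toReal_pos hvol.ne' hS.measure_lt_top.ne
  have hup : ∀ N : ℕ, I N ≤ (volume S).toReal * Real.exp ((N : ℝ) * M) := by
    intro N
    rw [hIeq]
    calc ∫ s in S, Real.exp ((N : ℝ) * f s)
        ≤ ∫ _ in S, Real.exp ((N : ℝ) * M) := by
          refine setIntegral_mono_on (hInt N)
            (integrableOn_const hS.measure_lt_top.ne) hS.measurableSet ?_
          intro x hx
          exact Real.exp_le_exp.2 (mul_le_mul_of_nonneg_left (hmax x hx) (Nat.cast_nonneg N))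
      _ = (volume S).toReal * Real.exp ((N : ℝ) * M) := by
          rw [setIntegral_const, smul_eq_mul]; rfl
  have hIpos : ∀ N : ℕ, 0 < I N := by
    obtain ⟨c, hc, h⟩ := hlow 1 one_pos
    exact fun N => lt_of_lt_of_le (by positivity) (h N)
  -- log I N / N → M
  have haN : Tendsto (fun N : ℕ => Real.log (I N) / (N : ℝ)) atTop (𝓝 M) := by
    rw [tendsto_order]
    constructor
    · intro c hc
      obtain ⟨c0, hc0, hb⟩ := hlow ((M - c) / 2) (by linarith)
      have h2 : Tendsto (fun N : ℕ => Real.log c0 / (N : ℝ) + (M - (M - c) / 2)) atTop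
          (𝓝 (0 + (M - (M - c) / 2))) :=
        (tendsto_const_div_atTop_nhds_zero_nat _).add tendsto_const_nhds
      rw [zero_add] at h2
      have h3 : ∀ᶠ N : ℕ in atTop, c < Real.log c0 / (N : ℝ) + (M - (M - c) / 2) :=
        h2.eventually (eventually_gt_nhds (by linarith))
      filter_upwards [h3, eventually_ge_atTop 1] with N hN hN1
      have hN0 : (0 : ℝ) < (N : ℝ) := by exact_mod_cast hN1
      have hlog : Real.log c0 + (N : ℝ) * (M - (M - c) / 2) ≤ Real.log (I N) := by
        calc Real.log c0 + (N : ℝ) * (M - (M - c) / 2)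
            = Real.log (c0 * Real.exp ((N : ℝ) * (M - (M - c) / 2))) := by
              rw [Real.log_mul hc0.ne' (Real.exp_pos _).ne', Real.log_exp]
          _ ≤ Real.log (I N) := Real.log_le_log (by positivity) (hb N)
      calc c < Real.log c0 / (N : ℝ) + (M - (M - c) / 2) := hN
        _ = (Real.log c0 + (N : ℝ) * (M - (M - c) / 2)) / (N : ℝ) := by
            field_simp
        _ ≤ Real.log (I N) / (N : ℝ) := by gcongr
    · intro c hc
      have h2 : Tendsto (fun N : ℕ => Real.log ((volume S).toReal) / (N : ℝ) + M) atTop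
          (𝓝 (0 + M)) :=
        (tendsto_const_div_atTop_nhds_zero_nat _).add tendsto_const_nhds
      rw [zero_add] at h2
      have h3 : ∀ᶠ N : ℕ in atTop,
          Real.log ((volume S).toReal) / (N : ℝ) + M < c :=
        h2.eventually (eventually_lt_nhds hc)
      filter_upwards [h3, eventually_ge_atTop 1] with N hN hN1
      have hN0 : (0 : ℝ) < (N : ℝ) := by exact_mod_cast hN1
      have hlog : Real.log (I N) ≤ Real.log ((volume S).toReal) + (N : ℝ) * M := by
        calc Real.log (I N)
            ≤ Real.log ((volume S).toReal * Real.exp ((N : ℝ) * M)) :=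
              Real.log_le_log (hIpos N) (hup N)
          _ = Real.log ((volume S).toReal) + (N : ℝ) * M := by
              rw [Real.log_mul hVS.ne' (Real.exp_pos _).ne', Real.log_exp]
      calc Real.log (I N) / (N : ℝ)
          ≤ (Real.log ((volume S).toReal) + (N : ℝ) * M) / (N : ℝ) := by gcongr
        _ = Real.log ((volume S).toReal) / (N : ℝ) + M := by field_simp
        _ < c := hN
  -- conclude
  have hgNt : ∀ N : ℕ, gN N t = Real.exp ((N : ℝ) * f t) / I N := fun N => hgN N t
  have heq : (fun N : ℕ => (gN N t) ^ ((N : ℝ)⁻¹)) =ᶠ[atTop]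
      (fun N : ℕ => Real.exp (f t - Real.log (I N) / (N : ℝ))) := by
    filter_upwards [eventually_ge_atTop 1] with N hN1
    have hN0 : (0 : ℝ) < (N : ℝ) := by exact_mod_cast hN1
    have hpos : 0 < gN N t := by
      rw [hgNt]; exact div_pos (Real.exp_pos _) (hIpos N)
    rw [Real.rpow_def_of_pos hpos, hgNt,
      Real.log_div (Real.exp_pos _).ne' (hIpos N).ne', Real.log_exp]
    congr 1
    field_simp
  have hlim : Tendsto (fun N : ℕ => Real.exp (f t - Real.log (I N) / (N : ℝ))) atTop
      (𝓝 (Real.exp (f t - M))) :=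
    (Real.continuous_exp.tendsto _).comp (haN.const_sub (f t))
  have hfinal : Real.exp (f t - M) = Real.exp (-(φ t - φ t' - ⟪m, t - t'⟫)) := by
    have h2 : ⟪m, t - t'⟫ = ⟪t, m⟫ - ⟪t', m⟫ := by
      rw [inner_sub_right, real_inner_comm m t, real_inner_comm m t']
    simp only [hf, hMdef]
    rw [h2]; ring_nf
  rw [show Real.exp (-(φ t - φ t' - ⟪m, t - t'⟫)) = Real.exp (f t - M) from hfinal.symm]
  exact Tendsto.congr' heq.symm hlim
end
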